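/- Let E be a directed graph, 𝒟 its path category, and let (𝒞, 𝒟, ◁, ▷) be a length-preserving matched pair (length(c ◁ α) = length(α) for all composable pairs). Fix p ≥ 0. For q ≥ 0 let N_q be the free abelian group on the set of tuples (c; α₁, …, α_q), where c = (c₁, …, c_p) is a composable p-tuple of 𝒞-morphisms, (α₁, …, α_q) is a composable q-tuple of paths each of length ≥ 1, and source(c_p) = range(α₁). Define ∂_j : N_q → N_{q−1} on generators by: ∂₀(c; α₁, …, α_q) = (c ▷ α₁; α₂, …, α_q) (using the extended right action of paths on 𝒞-tuples); ∂_j(c; α₁, …, α_q) = (c; α₁, …, α_j ∘ α_{j+1}, …, α_q) for 1 ≤ j ≤ q−1; and ∂_q(c; α₁, …, α_q) = (c; α₁, …, α_{q−1}); and set d_q := Σ_{j=0}^{q} (−1)^j ∂_j. Define s_q : N_q → N_{q+1} on generators by s_q(c; α₁, …, α_q) = −Σ_{i=1}^{ℓ−1} (c ▷ α₁^{[0,i−1]}; α₁^i, α₁^{[i,ℓ]}, α₂, …, α_q), where ℓ = length(α₁) and α₁ = α₁^{[0,i−1]} ∘ α₁^i ∘ α₁^{[i,ℓ]} with α₁^{[0,i−1]}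 the first i−1 edges (at the range end), α₁^i the i-th edge, and α₁^{[i,ℓ]} the remaining ℓ−i edges (the sum is empty if ℓ = 1). Then for every q ≥ 2: d_{q+1} ∘ s_q + s_{q−1} ∘ d_q = id on N_q. -/

import Mathlib

open CategoryTheory

universe v u

/-- A matched pair of small-category structures `C`, `D` on a common object type `V`.
A `C`-morphism `c : m ⟶ y` (source `m`, range `y`) and a `D`-morphism `d : z ⟶ m` determine
an object `w c d`, a `D`-morphism `c ◁ d : w c d ⟶ y` and a `C`-morphism `c ▷ d : z ⟶ w c d`.
Morphism equations across different intermediate objects are expressed with `HEq`. -/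
structure MatchedPair (V : Type u) (C : Category.{v} V) (D : Category.{v} V) where
  w : ∀ {z m y : V}, C.Hom m y → D.Hom z m → V
  la : ∀ {z m y : V} (c : C.Hom m y) (d : D.Hom z m), D.Hom (w c d) y
  ra : ∀ {z m y : V} (c : C.Hom m y) (d : D.Hom z m), C.Hom z (w c d)
  w_id_left : ∀ {z m : V} (d : D.Hom z m), w (C.id m) d = z
  la_id_left : ∀ {z m : V} (d : D.Hom z m), HEq (la (C.id m) d) d
  ra_id_left : ∀ {z m : V} (d : D.Hom z m), HEq (ra (C.id m) d) (C.id z)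
  w_id_right : ∀ {m y : V} (c : C.Hom m y), w c (D.id m) = y
  la_id_right : ∀ {m y : V} (c : C.Hom m y), HEq (la c (D.id m)) (D.id y)
  ra_id_right : ∀ {m y : V} (c : C.Hom m y), HEq (ra c (D.id m)) c
  w_comp_left : ∀ {z m k y : V} (c₁ : C.Hom k y) (c₂ : C.Hom m k) (d : D.Hom z m),
      w (C.comp c₂ c₁) d = w c₁ (la c₂ d)
  la_comp_left : ∀ {z m k y : V} (c₁ : C.Hom k y) (c₂ : C.Hom m k) (d : D.Hom z m),
      HEq (la (C.comp c₂ c₁) d) (la c₁ (la c₂ d))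
  ra_comp_left : ∀ {z m k y : V} (c₁ : C.Hom k y) (c₂ : C.Hom m k) (d : D.Hom z m),
      HEq (ra (C.comp c₂ c₁) d) (C.comp (ra c₂ d) (ra c₁ (la c₂ d)))
  w_comp_right : ∀ {z k m y : V} (c : C.Hom m y) (d₁ : D.Hom k m) (d₂ : D.Hom z k),
      w c (D.comp d₂ d₁) = w (ra c d₁) d₂
  la_comp_right : ∀ {z k m y : V} (c : C.Hom m y) (d₁ : D.Hom k m) (d₂ : D.Hom z k),
      HEq (la c (D.comp d₂ d₁)) (D.comp (la (ra c d₁) d₂) (la c d₁))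
  ra_comp_right : ∀ {z k m y : V} (c : C.Hom m y) (d₁ : D.Hom k m) (d₂ : D.Hom z k),
      HEq (ra c (D.comp d₂ d₁)) (ra (ra c d₁) d₂)

/-- The path category of a directed graph (quiver) `V`, as an explicit category structure
on the vertex type `V`: morphisms are finite paths, composed by concatenation. -/
@[reducible]
def pathsCat (V : Type u) [Quiver.{v + 1} V] : Category.{max u (v + 1)} V where
  Hom a b := Quiver.Path a b
  id a := Quiver.Path.nil
  comp f g := f.comp g
  id_comp f := Quiver.Path.nil_comp f
  comp_id f := Quiver.Path.comp_nil f
  assoc f g h := Quiver.Path.comp_assoc f g h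

/-- Composable tuples `(d₀, …, d_{k-1})` of `𝒟`-morphisms (`d₀` at the range end). -/
inductive DTup {V : Type u} (D : Category.{v} V) : ℕ → V → V → Type (max u v)
  | nil (x : V) : DTup D 0 x x
  | cons {k : ℕ} {z m y : V} (d : D.Hom m y) (rest : DTup D k z m) : DTup D (k + 1) z y

/-- Composable tuples `(c₀, …, c_{k-1})` of `𝒞`-morphisms (`c_{k-1}` at the source end). -/
inductive CTup {V : Type u} (C : Category.{v} V) : ℕ → V → V → Type (max u v)
  | nil (x : V) : CTup C 0 x x
  | snoc {k : ℕ} {z m y : V} (rest : CTup C k m y) (c : C.Hom z m) : CTup C (k + 1) z y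

namespace MatchedPair

variable {V : Type u} {C D : Category.{v} V}

/-- The extended right action `(c₀, …, c_k) ▷ d` of a `𝒟`-morphism on composable tuples of
`𝒞`-morphisms, together with its range object. -/
def raT (M : MatchedPair V C D) :
    ∀ {k : ℕ} {z m y : V}, CTup C k m y → D.Hom z m → Σ y' : V, CTup C k z y'
  | 0, z, _, _, CTup.nil _, _ => ⟨z, CTup.nil z⟩
  | _ + 1, _, _, _, CTup.snoc rest c, d =>
      ⟨(raT M rest (M.la c d)).1, CTup.snoc (raT M rest (M.la c d)).2 (M.ra c d)⟩

end MatchedPair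

namespace DTup

variable {V : Type u} {D : Category.{v} V}

/-- Split off the first (range-end) entry of a nonempty composable tuple. -/
def split : ∀ {k : ℕ} {z y : V}, DTup D (k + 1) z y → Σ m : V, D.Hom m y × DTup D k z m
  | _, _, _, cons d rest => ⟨_, d, rest⟩

/-- The face `∂^{k+1}`: delete the last (source-end) entry. -/
def dropLast : ∀ {k : ℕ} {z y : V}, DTup D (k + 1) z y → Σ m : V, DTup D k m y
  | 0, _, _, cons _ (nil _) => ⟨_, nil _⟩
  | _ + 1, _, _, cons d rest => ⟨(dropLast rest).1, cons d (dropLast rest).2⟩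

/-- The face `∂^{i+1}` for `i : Fin k`: compose the adjacent entries in positions `i` and
`i+1` counting from the range end. -/
def composeAt : ∀ {k : ℕ} {z y : V}, Fin k → DTup D (k + 1) z y → DTup D k z y
  | _ + 1, _, _, ⟨0, _⟩, cons d₀ (cons d₁ rest) => cons (D.comp d₁ d₀) rest
  | _ + 1, _, _, ⟨i + 1, _⟩, cons d₀ rest => cons d₀ (composeAt ⟨i, by omega⟩ rest)

end DTup

section PathTuples

variable {V : Type u} [Quiver.{v + 1} V]

/-- All entries of a composable tuple of paths have length `≥ 1`. -/
def AllPos : ∀ {q : ℕ} {z m : V}, DTup (pathsCat V) q z m → Prop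
  | _, _, _, DTup.nil _ => True
  | _, _, _, DTup.cons d rest => 1 ≤ Quiver.Path.length d ∧ AllPos rest

theorem allPos_tail {q : ℕ} {z m : V} (α : DTup (pathsCat V) (q + 1) z m)
    (h : AllPos α) : AllPos (DTup.split α).2.2 := by
  cases α with
  | cons d rest => exact h.2

theorem allPos_composeAt : ∀ {q : ℕ} {z m : V} (i : Fin q)
    (α : DTup (pathsCat V) (q + 1) z m), AllPos α → AllPos (DTup.composeAt i α)
  | _ + 1, _, _, ⟨0, _⟩, DTup.cons d₀ (DTup.cons d₁ rest), h => by
      refine ⟨?_, h.2.2⟩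
      have hl : Quiver.Path.length ((pathsCat V).comp d₁ d₀) =
          Quiver.Path.length d₁ + Quiver.Path.length d₀ := Quiver.Path.length_comp d₁ d₀
      have h1 := h.1
      have h2 := h.2.1
      omega
  | _ + 1, _, _, ⟨i + 1, _⟩, DTup.cons d₀ rest, h =>
      ⟨h.1, allPos_composeAt ⟨i, by omega⟩ rest h.2⟩

theorem allPos_dropLast : ∀ {q : ℕ} {z m : V}
    (α : DTup (pathsCat V) (q + 1) z m), AllPos α → AllPos (DTup.dropLast α).2
  | 0, _, _, DTup.cons _ (DTup.nil _), _ => trivial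
  | _ + 1, _, _, DTup.cons d rest, h => ⟨h.1, allPos_dropLast rest h.2⟩

end PathTuples

section Complex

variable {V : Type u} [Quiver.{v + 1} V] {cC : Category.{max u (v + 1)} V}

/-- Generators of `N_q`: tuples `(c; α₁, …, α_q)` where `c` is a composable `p`-tuple of
`𝒞`-morphisms, `(α₁, …, α_q)` is a composable `q`-tuple of paths of length `≥ 1`, and
`source(c_p) = range(α₁)`. -/
abbrev NGen (_M : MatchedPair V cC (pathsCat V)) (p q : ℕ) : Type (max u (v + 1)) :=
  Σ (z m y : V), CTup cC p m y × {α : DTup (pathsCat V) q z m // AllPos α}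

/-- The group `N_q` of nondegenerate vertical chains: the free abelian group on `NGen q`. -/
abbrev NGrp (M : MatchedPair V cC (pathsCat V)) (p q : ℕ) : Type (max u (v + 1)) :=
  NGen M p q →₀ ℤ

variable (M : MatchedPair V cC (pathsCat V)) (p : ℕ)

/-- The face `∂₀(c; α₁, …, α_q) = (c ▷ α₁; α₂, …, α_q)` (using the extended right action). -/
def face0 {q : ℕ} (g : NGen M p (q + 1)) : NGen M p q :=
  match g with
  | ⟨z, _, _, cs, ⟨α, hα⟩⟩ =>
    ⟨z, (DTup.split α).1, (M.raT cs (DTup.split α).2.1).1,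
      (M.raT cs (DTup.split α).2.1).2, ⟨(DTup.split α).2.2, allPos_tail α hα⟩⟩

/-- The face `∂_{i+1}` for `i : Fin q`: compose two adjacent paths. -/
def faceMid {q : ℕ} (i : Fin q) (g : NGen M p (q + 1)) : NGen M p q :=
  match g with
  | ⟨z, m, y, cs, ⟨α, hα⟩⟩ =>
    ⟨z, m, y, cs, ⟨DTup.composeAt i α, allPos_composeAt i α hα⟩⟩

/-- The face `∂_{q+1}`: delete the last path. -/
def faceLast {q : ℕ} (g : NGen M p (q + 1)) : NGen M p q :=
  match g with
  | ⟨_, m, y, cs, ⟨α, hα⟩⟩ =>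
    ⟨(DTup.dropLast α).1, m, y, cs, ⟨(DTup.dropLast α).2, allPos_dropLast α hα⟩⟩

/-- The boundary map `d_{q+1} = Σ_{j=0}^{q+1} (−1)^j ∂_j : N_{q+1} → N_q`. -/
noncomputable def bd (q : ℕ) : NGrp M p (q + 1) →+ NGrp M p q :=
  Finsupp.liftAddHom (fun g => (zmultiplesHom (NGrp M p q))
    (Finsupp.single (face0 M p g) 1
      + (∑ i : Fin q, (-1 : ℤ) ^ ((i : ℕ) + 1) • Finsupp.single (faceMid M p i g) 1)
      + (-1 : ℤ) ^ (q + 1) • Finsupp.single (faceLast M p g) 1))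

/-- Auxiliary sum for the homotopy `s`: given a generator `(c; α₁, …, α_q)` whose first path
has been decomposed as `α₁ = ρ ∘ pa` (`ρ` the range-end part already peeled off), this is
`Σ (c ▷ (α₁^{[0,i−1]}); α₁^i, α₁^{[i,ℓ]}, α₂, …, α_q)` over the remaining decompositions of
`pa` with source-end part of length `≥ 1`. -/
noncomputable def sAux {q : ℕ} {z yc m m₁ : V} (cs : CTup cC p m yc)
    (rest : DTup (pathsCat V) q z m₁) (hrest : AllPos rest) :
    ∀ {w : V}, Quiver.Path w m → Quiver.Path m₁ w → NGrp M p (q + 2)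
  | _, _, Quiver.Path.nil => 0
  | _, ρ, Quiver.Path.cons β e =>
      (if h : 1 ≤ Quiver.Path.length β then
        Finsupp.single
          (⟨z, _, (M.raT cs ρ).1, (M.raT cs ρ).2,
            ⟨DTup.cons (Quiver.Hom.toPath e) (DTup.cons β rest),
              ⟨by simp [Quiver.Hom.toPath], h, hrest⟩⟩⟩ : NGen M p (q + 2)) 1
      else 0)
      + sAux cs rest hrest ((Quiver.Hom.toPath e).comp ρ) β

/-- The value of the homotopy `s_q` on a generator `(c; α₁, …, α_q)` (before negation):
the sum over decompositions `α₁ = α₁^{[0,i−1]} ∘ α₁^i ∘ α₁^{[i,ℓ]}` with `1 ≤ i ≤ ℓ−1`. -/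
noncomputable def sGen {q : ℕ} : NGen M p (q + 1) → NGrp M p (q + 2)
  | ⟨_, _, _, cs, ⟨DTup.cons α₁ rest, hα⟩⟩ => sAux M p cs rest hα.2 Quiver.Path.nil α₁

/-- The homotopy `s_q : N_q → N_{q+1}`. -/
noncomputable def sMap (q : ℕ) : NGrp M p (q + 1) →+ NGrp M p (q + 2) :=
  Finsupp.liftAddHom (fun g => (zmultiplesHom (NGrp M p (q + 2))) (- sGen M p g))

end Complex
namespace MatchedPair

variable {V : Type u} {C D : Category.{v} V} (M : MatchedPair V C D)

private theorem pack_snoc {k : ℕ} {z m₃ y : V} (rest : CTup C k m₃ y)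
    {w₁ w₂ : V} (hw : w₁ = w₂)
    (l₁ : D.Hom w₁ m₃) (l₂ : D.Hom w₂ m₃) (hl : HEq l₁ l₂)
    (r₁ : C.Hom z w₁) (r₂ : C.Hom z w₂) (hr : HEq r₁ r₂) :
    (⟨(M.raT rest l₁).1, CTup.snoc (M.raT rest l₁).2 r₁⟩ : Σ y', CTup C (k + 1) z y')
      = ⟨(M.raT rest l₂).1, CTup.snoc (M.raT rest l₂).2 r₂⟩ := by
  subst hw
  rw [eq_of_heq hl, eq_of_heq hr]

theorem raT_id : ∀ {k : ℕ} {m y : V} (cs : CTup C k m y),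
    M.raT cs (D.id m) = ⟨y, cs⟩
  | 0, _, _, CTup.nil x => rfl
  | k + 1, m, y, CTup.snoc rest c => by
    show (⟨(M.raT rest (M.la c (D.id m))).1,
        CTup.snoc (M.raT rest (M.la c (D.id m))).2 (M.ra c (D.id m))⟩ : Σ y', CTup C (k+1) m y')
      = ⟨y, CTup.snoc rest c⟩
    rw [pack_snoc M rest (M.w_id_right c) _ (D.id _) (M.la_id_right c) _ c (M.ra_id_right c)]
    rw [raT_id rest]

theorem raT_comp : ∀ {k : ℕ} {m y : V} (cs : CTup C k m y) {k' z : V}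
    (d₁ : D.Hom k' m) (d₂ : D.Hom z k'),
    M.raT cs (D.comp d₂ d₁) = M.raT (M.raT cs d₁).2 d₂
  | 0, _, _, CTup.nil x, _, _, d₁, d₂ => rfl
  | k + 1, m, y, CTup.snoc rest c, k', z, d₁, d₂ => by
    show (⟨(M.raT rest (M.la c (D.comp d₂ d₁))).1,
        CTup.snoc (M.raT rest (M.la c (D.comp d₂ d₁))).2 (M.ra c (D.comp d₂ d₁))⟩
        : Σ y', CTup C (k+1) z y')
      = M.raT (M.raT (CTup.snoc rest c) d₁).2 d₂
    rw [pack_snoc M rest (M.w_comp_right c d₁ d₂) _ _ (M.la_comp_right c d₁ d₂)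
      _ _ (M.ra_comp_right c d₁ d₂)]
    rw [raT_comp rest (M.la c d₁) (M.la (M.ra c d₁) d₂)]
    rfl

end MatchedPair
section Lemmas

variable {V : Type u} [Quiver.{v + 1} V] {cC : Category.{max u (v + 1)} V}
variable (M : MatchedPair V cC (pathsCat V)) (p : ℕ)

theorem raT_comp' {k : ℕ} {m y : V} (cs : CTup cC k m y) {k' z : V}
    (d₁ : Quiver.Path k' m) (d₂ : Quiver.Path z k') :
    M.raT cs (d₂.comp d₁) = M.raT (M.raT cs d₁).2 d₂ :=
  M.raT_comp cs d₁ d₂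

theorem raT_id' {k : ℕ} {m y : V} (cs : CTup cC k m y) :
    M.raT cs (Quiver.Path.nil (a := m)) = ⟨y, cs⟩ :=
  M.raT_id cs

theorem sAux_shift {q : ℕ} {z yc m m₁ w₀ : V} (cs : CTup cC p m yc)
    (ρ : Quiver.Path w₀ m) (rest : DTup (pathsCat V) q z m₁) (hrest : AllPos rest) :
    ∀ {w : V} (ρ₂ : Quiver.Path w w₀) (pa : Quiver.Path m₁ w),
      sAux M p (M.raT cs ρ).2 rest hrest ρ₂ pa
        = sAux M p cs rest hrest (ρ₂.comp ρ) pa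
  | _, ρ₂, Quiver.Path.nil => rfl
  | _, ρ₂, Quiver.Path.cons β e => by
    have h1 := sAux_shift cs ρ rest hrest ((Quiver.Hom.toPath e).comp ρ₂) β
    simp only [sAux]
    rw [h1, Quiver.Path.comp_assoc, raT_comp' M cs ρ ρ₂]

theorem bd_single (q : ℕ) (g : NGen M p (q + 1)) :
    bd M p q (Finsupp.single g 1)
      = Finsupp.single (face0 M p g) 1
        + (∑ i : Fin q, (-1 : ℤ) ^ ((i : ℕ) + 1) • Finsupp.single (faceMid M p i g) 1)
        + (-1 : ℤ) ^ (q + 1) • Finsupp.single (faceLast M p g) 1 := by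
  simp [bd]

theorem sMap_single (q : ℕ) (g : NGen M p (q + 1)) :
    sMap M p q (Finsupp.single g 1) = - sGen M p g := by
  simp [sMap]

end Lemmas
section Grand

variable {V : Type u} [Quiver.{v + 1} V] {cC : Category.{max u (v + 1)} V}
variable (M : MatchedPair V cC (pathsCat V)) (p r : ℕ)

theorem sAux_edge {q : ℕ} {z yc m m₁ w : V} (cs : CTup cC p m yc)
    (rest : DTup (pathsCat V) q z m₁) (h : AllPos rest) (ρ : Quiver.Path w m) (e : m₁ ⟶ w) :
    sAux M p cs rest h ρ (Quiver.Path.cons Quiver.Path.nil e) = 0 := by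
  simp only [sAux]
  rw [dif_neg (by simp)]
  simp

theorem grand {z₀ m₁ m₂ m y : V} (cs : CTup cC p m y)
    (α₂ : Quiver.Path m₂ m₁) (h₂ : 1 ≤ α₂.length)
    (rest' : DTup (pathsCat V) r z₀ m₂) (hrest' : AllPos rest') :
    ∀ {w : V} (ρ : Quiver.Path w m) (pa : Quiver.Path m₁ w) (hpa : 1 ≤ pa.length),
      bd M p (r + 2) (- sAux M p cs (DTup.cons α₂ rest') ⟨h₂, hrest'⟩ ρ pa)
        + sMap M p r (bd M p (r + 1)
            (Finsupp.single (⟨z₀, w, (M.raT cs ρ).1, (M.raT cs ρ).2,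
              ⟨DTup.cons pa (DTup.cons α₂ rest'), ⟨hpa, h₂, hrest'⟩⟩⟩ : NGen M p (r + 2)) 1))
        = Finsupp.single (⟨z₀, w, (M.raT cs ρ).1, (M.raT cs ρ).2,
            ⟨DTup.cons pa (DTup.cons α₂ rest'), ⟨hpa, h₂, hrest'⟩⟩⟩ : NGen M p (r + 2)) 1
  | _, ρ, Quiver.Path.nil, hpa => absurd hpa (by simp)
  | w, ρ, Quiver.Path.cons Quiver.Path.nil e, hpa => by
    have hz : sAux M p cs (DTup.cons α₂ rest') ⟨h₂, hrest'⟩ ρ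
        (Quiver.Path.cons Quiver.Path.nil e) = 0 := sAux_edge M p cs _ _ ρ e
    rw [hz, neg_zero, map_zero, zero_add, bd_single]
    simp only [map_add, map_sum, map_zsmul, sMap_single]
    have hface0 : sGen M p (face0 M p (⟨z₀, w, (M.raT cs ρ).1, (M.raT cs ρ).2,
        ⟨DTup.cons (Quiver.Path.cons Quiver.Path.nil e) (DTup.cons α₂ rest'),
          ⟨hpa, h₂, hrest'⟩⟩⟩ : NGen M p (r + 2)))
        = sAux M p cs rest' hrest' ((Quiver.Hom.toPath e).comp ρ) α₂ := by
      show sAux M p (M.raT (M.raT cs ρ).2 (Quiver.Hom.toPath e)).2 rest' hrest'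
        Quiver.Path.nil α₂ = _
      rw [← raT_comp' M cs ρ (Quiver.Hom.toPath e), sAux_shift, Quiver.Path.nil_comp]
    have hmid0 : sGen M p (faceMid M p 0 (⟨z₀, w, (M.raT cs ρ).1, (M.raT cs ρ).2,
        ⟨DTup.cons (Quiver.Path.cons Quiver.Path.nil e) (DTup.cons α₂ rest'),
          ⟨hpa, h₂, hrest'⟩⟩⟩ : NGen M p (r + 2)))
        = Finsupp.single (⟨z₀, w, (M.raT cs ρ).1, (M.raT cs ρ).2,
            ⟨DTup.cons (Quiver.Path.cons Quiver.Path.nil e) (DTup.cons α₂ rest'),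
              ⟨hpa, h₂, hrest'⟩⟩⟩ : NGen M p (r + 2)) 1
          + sAux M p cs rest' hrest' ((Quiver.Hom.toPath e).comp ρ) α₂ := by
      show sAux M p (M.raT cs ρ).2 rest' hrest' Quiver.Path.nil
        (Quiver.Path.cons α₂ e) = _
      rw [sAux_shift, Quiver.Path.nil_comp]
      simp only [sAux]
      rw [dif_pos h₂]
      rfl
    have hmids : ∀ i : Fin r, sGen M p (faceMid M p i.succ
        (⟨z₀, w, (M.raT cs ρ).1, (M.raT cs ρ).2,
        ⟨DTup.cons (Quiver.Path.cons Quiver.Path.nil e) (DTup.cons α₂ rest'),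
          ⟨hpa, h₂, hrest'⟩⟩⟩ : NGen M p (r + 2))) = 0 := by
      intro i
      show sAux M p _ _ _ _ (Quiver.Path.cons Quiver.Path.nil e) = 0
      exact sAux_edge M p _ _ _ _ _
    have hlast : sGen M p (faceLast M p (⟨z₀, w, (M.raT cs ρ).1, (M.raT cs ρ).2,
        ⟨DTup.cons (Quiver.Path.cons Quiver.Path.nil e) (DTup.cons α₂ rest'),
          ⟨hpa, h₂, hrest'⟩⟩⟩ : NGen M p (r + 2))) = 0 := by
      show sAux M p _ _ _ _ (Quiver.Path.cons Quiver.Path.nil e) = 0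
      exact sAux_edge M p _ _ _ _ _
    rw [hface0, hlast, Fin.sum_univ_succ, hmid0]
    rw [Finset.sum_eq_zero (fun i _ => by rw [hmids i]; simp)]
    simp
  | w, ρ, @Quiver.Path.cons _ _ _ bb _ (@Quiver.Path.cons _ _ _ bg _ γ f) e, hpa => by
    have hβ : (1:ℕ) ≤ (Quiver.Path.cons γ f).length := Nat.succ_le_succ (Nat.zero_le _)
    have IH := grand cs α₂ h₂ rest' hrest' ((Quiver.Hom.toPath e).comp ρ) (Quiver.Path.cons γ f) hβ
    have hIH := eq_sub_of_add_eq IH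
    have hunf : sAux M p cs (DTup.cons α₂ rest') ⟨h₂, hrest'⟩ ρ
          (Quiver.Path.cons (Quiver.Path.cons γ f) e)
        = Finsupp.single (⟨z₀, w, (M.raT cs ρ).1, (M.raT cs ρ).2,
            ⟨DTup.cons (Quiver.Hom.toPath e)
                (DTup.cons (Quiver.Path.cons γ f) (DTup.cons α₂ rest')),
              ⟨by simp [Quiver.Hom.toPath], hβ, h₂, hrest'⟩⟩⟩ : NGen M p (r + 3)) 1
          + sAux M p cs (DTup.cons α₂ rest') ⟨h₂, hrest'⟩
              ((Quiver.Hom.toPath e).comp ρ) (Quiver.Path.cons γ f) := by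
      simp only [sAux]; rw [dif_pos hβ]
    rw [hunf, neg_add, map_add, map_neg, hIH]
    simp only [bd_single, map_add, map_sum, map_zsmul, sMap_single]
    have h1 : (face0 M p (⟨z₀, w, (M.raT cs ρ).1, (M.raT cs ρ).2,
          ⟨DTup.cons (Quiver.Hom.toPath e)
              (DTup.cons (Quiver.Path.cons γ f) (DTup.cons α₂ rest')),
            ⟨by simp [Quiver.Hom.toPath], hβ, h₂, hrest'⟩⟩⟩ : NGen M p (r + 3)))
        = (⟨z₀, bb, (M.raT cs ((Quiver.Hom.toPath e).comp ρ)).1,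
            (M.raT cs ((Quiver.Hom.toPath e).comp ρ)).2,
            ⟨DTup.cons (Quiver.Path.cons γ f) (DTup.cons α₂ rest'),
              ⟨hβ, h₂, hrest'⟩⟩⟩ : NGen M p (r + 2)) := by
      show (⟨z₀, bb, (M.raT (M.raT cs ρ).2 (Quiver.Hom.toPath e)).1,
          (M.raT (M.raT cs ρ).2 (Quiver.Hom.toPath e)).2,
          ⟨DTup.cons (Quiver.Path.cons γ f) (DTup.cons α₂ rest'),
            ⟨hβ, h₂, hrest'⟩⟩⟩ : NGen M p (r + 2)) = _
      rw [← raT_comp' M cs ρ (Quiver.Hom.toPath e)]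
    have h5 : sGen M p (face0 M p (⟨z₀, w, (M.raT cs ρ).1, (M.raT cs ρ).2,
          ⟨DTup.cons (Quiver.Path.cons (Quiver.Path.cons γ f) e) (DTup.cons α₂ rest'),
            ⟨hpa, h₂, hrest'⟩⟩⟩ : NGen M p (r + 2)))
        = sGen M p (face0 M p (⟨z₀, bb, (M.raT cs ((Quiver.Hom.toPath e).comp ρ)).1,
            (M.raT cs ((Quiver.Hom.toPath e).comp ρ)).2,
            ⟨DTup.cons (Quiver.Path.cons γ f) (DTup.cons α₂ rest'),
              ⟨hβ, h₂, hrest'⟩⟩⟩ : NGen M p (r + 2))) := by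
      have hL : sGen M p (face0 M p (⟨z₀, w, (M.raT cs ρ).1, (M.raT cs ρ).2,
            ⟨DTup.cons (Quiver.Path.cons (Quiver.Path.cons γ f) e) (DTup.cons α₂ rest'),
              ⟨hpa, h₂, hrest'⟩⟩⟩ : NGen M p (r + 2)))
          = sAux M p cs rest' hrest'
              ((Quiver.Path.cons (Quiver.Path.cons γ f) e).comp ρ) α₂ := by
        show sAux M p (M.raT (M.raT cs ρ).2
            (Quiver.Path.cons (Quiver.Path.cons γ f) e)).2 rest' hrest' Quiver.Path.nil α₂ = _
        rw [← raT_comp' M cs ρ (Quiver.Path.cons (Quiver.Path.cons γ f) e), sAux_shift,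
          Quiver.Path.nil_comp]
      have hR : sGen M p (face0 M p (⟨z₀, bb, (M.raT cs ((Quiver.Hom.toPath e).comp ρ)).1,
            (M.raT cs ((Quiver.Hom.toPath e).comp ρ)).2,
            ⟨DTup.cons (Quiver.Path.cons γ f) (DTup.cons α₂ rest'),
              ⟨hβ, h₂, hrest'⟩⟩⟩ : NGen M p (r + 2)))
          = sAux M p cs rest' hrest'
              ((Quiver.Path.cons γ f).comp ((Quiver.Hom.toPath e).comp ρ)) α₂ := by
        show sAux M p (M.raT (M.raT cs ((Quiver.Hom.toPath e).comp ρ)).2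
            (Quiver.Path.cons γ f)).2 rest' hrest' Quiver.Path.nil α₂ = _
        rw [← raT_comp' M cs ((Quiver.Hom.toPath e).comp ρ) (Quiver.Path.cons γ f), sAux_shift,
          Quiver.Path.nil_comp]
      rw [hL, hR, ← Quiver.Path.comp_assoc]
      rfl
    have h3 : ∀ i : Fin (r + 1),
        sGen M p (faceMid M p i (⟨z₀, w, (M.raT cs ρ).1, (M.raT cs ρ).2,
          ⟨DTup.cons (Quiver.Path.cons (Quiver.Path.cons γ f) e) (DTup.cons α₂ rest'),
            ⟨hpa, h₂, hrest'⟩⟩⟩ : NGen M p (r + 2)))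
        = Finsupp.single (faceMid M p i.succ (⟨z₀, w, (M.raT cs ρ).1, (M.raT cs ρ).2,
            ⟨DTup.cons (Quiver.Hom.toPath e)
                (DTup.cons (Quiver.Path.cons γ f) (DTup.cons α₂ rest')),
              ⟨by simp [Quiver.Hom.toPath], hβ, h₂, hrest'⟩⟩⟩ : NGen M p (r + 3))) 1
          + sGen M p (faceMid M p i (⟨z₀, bb, (M.raT cs ((Quiver.Hom.toPath e).comp ρ)).1,
              (M.raT cs ((Quiver.Hom.toPath e).comp ρ)).2,
              ⟨DTup.cons (Quiver.Path.cons γ f) (DTup.cons α₂ rest'),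
                ⟨hβ, h₂, hrest'⟩⟩⟩ : NGen M p (r + 2))) := by
      intro i
      induction i using Fin.cases with
      | zero =>
        have hc : (1:ℕ) ≤ (Quiver.Path.cons (α₂.comp γ) f).length :=
          Nat.succ_le_succ (Nat.zero_le _)
        have hR : sGen M p (faceMid M p 0 (⟨z₀, bb, (M.raT cs ((Quiver.Hom.toPath e).comp ρ)).1,
              (M.raT cs ((Quiver.Hom.toPath e).comp ρ)).2,
              ⟨DTup.cons (Quiver.Path.cons γ f) (DTup.cons α₂ rest'),
                ⟨hβ, h₂, hrest'⟩⟩⟩ : NGen M p (r + 2)))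
            = sAux M p cs rest' hrest' ((Quiver.Hom.toPath e).comp ρ)
                (Quiver.Path.cons (α₂.comp γ) f) := by
          show sAux M p (M.raT cs ((Quiver.Hom.toPath e).comp ρ)).2 rest' hrest'
            Quiver.Path.nil (Quiver.Path.cons (α₂.comp γ) f) = _
          rw [sAux_shift, Quiver.Path.nil_comp]
        rw [hR]
        show sAux M p (M.raT cs ρ).2 rest' hrest' Quiver.Path.nil
          (Quiver.Path.cons (Quiver.Path.cons (α₂.comp γ) f) e) = _
        rw [sAux_shift, Quiver.Path.nil_comp]
        simp only [sAux]
        rw [dif_pos hc]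
        rfl
      | succ j =>
        have hR : sGen M p (faceMid M p j.succ
              (⟨z₀, bb, (M.raT cs ((Quiver.Hom.toPath e).comp ρ)).1,
              (M.raT cs ((Quiver.Hom.toPath e).comp ρ)).2,
              ⟨DTup.cons (Quiver.Path.cons γ f) (DTup.cons α₂ rest'),
                ⟨hβ, h₂, hrest'⟩⟩⟩ : NGen M p (r + 2)))
            = sAux M p cs (DTup.composeAt j (DTup.cons α₂ rest'))
                (allPos_composeAt j _ ⟨h₂, hrest'⟩)
                ((Quiver.Hom.toPath e).comp ρ) (Quiver.Path.cons γ f) := by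
          show sAux M p (M.raT cs ((Quiver.Hom.toPath e).comp ρ)).2
            (DTup.composeAt j (DTup.cons α₂ rest')) (allPos_composeAt j _ ⟨h₂, hrest'⟩)
            Quiver.Path.nil (Quiver.Path.cons γ f) = _
          rw [sAux_shift, Quiver.Path.nil_comp]
        rw [hR]
        show sAux M p (M.raT cs ρ).2 (DTup.composeAt j (DTup.cons α₂ rest'))
          (allPos_composeAt j _ ⟨h₂, hrest'⟩) Quiver.Path.nil
          (Quiver.Path.cons (Quiver.Path.cons γ f) e) = _
        rw [sAux_shift, Quiver.Path.nil_comp]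
        simp only [sAux]
        rw [dif_pos hβ]
        rfl
    have h4 : sGen M p (faceLast M p (⟨z₀, w, (M.raT cs ρ).1, (M.raT cs ρ).2,
          ⟨DTup.cons (Quiver.Path.cons (Quiver.Path.cons γ f) e) (DTup.cons α₂ rest'),
            ⟨hpa, h₂, hrest'⟩⟩⟩ : NGen M p (r + 2)))
        = Finsupp.single (faceLast M p (⟨z₀, w, (M.raT cs ρ).1, (M.raT cs ρ).2,
            ⟨DTup.cons (Quiver.Hom.toPath e)
                (DTup.cons (Quiver.Path.cons γ f) (DTup.cons α₂ rest')),
              ⟨by simp [Quiver.Hom.toPath], hβ, h₂, hrest'⟩⟩⟩ : NGen M p (r + 3))) 1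
          + sGen M p (faceLast M p (⟨z₀, bb, (M.raT cs ((Quiver.Hom.toPath e).comp ρ)).1,
              (M.raT cs ((Quiver.Hom.toPath e).comp ρ)).2,
              ⟨DTup.cons (Quiver.Path.cons γ f) (DTup.cons α₂ rest'),
                ⟨hβ, h₂, hrest'⟩⟩⟩ : NGen M p (r + 2))) := by
      have hR : sGen M p (faceLast M p (⟨z₀, bb, (M.raT cs ((Quiver.Hom.toPath e).comp ρ)).1,
              (M.raT cs ((Quiver.Hom.toPath e).comp ρ)).2,
              ⟨DTup.cons (Quiver.Path.cons γ f) (DTup.cons α₂ rest'),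
                ⟨hβ, h₂, hrest'⟩⟩⟩ : NGen M p (r + 2)))
          = sAux M p cs (DTup.dropLast (DTup.cons α₂ rest')).2
              (allPos_dropLast (DTup.cons α₂ rest') ⟨h₂, hrest'⟩)
              ((Quiver.Hom.toPath e).comp ρ) (Quiver.Path.cons γ f) := by
        show sAux M p (M.raT cs ((Quiver.Hom.toPath e).comp ρ)).2
          (DTup.dropLast (DTup.cons α₂ rest')).2 (allPos_dropLast (DTup.cons α₂ rest') ⟨h₂, hrest'⟩)
          Quiver.Path.nil (Quiver.Path.cons γ f) = _
        rw [sAux_shift, Quiver.Path.nil_comp]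
      rw [hR]
      show sAux M p (M.raT cs ρ).2 (DTup.dropLast (DTup.cons α₂ rest')).2
        (allPos_dropLast (DTup.cons α₂ rest') ⟨h₂, hrest'⟩) Quiver.Path.nil
        (Quiver.Path.cons (Quiver.Path.cons γ f) e) = _
      rw [sAux_shift, Quiver.Path.nil_comp]
      simp only [sAux]
      rw [dif_pos hβ]
      rfl
    have hsumT : (∑ i : Fin (r + 2), (-1:ℤ) ^ ((i:ℕ) + 1) •
          Finsupp.single (faceMid M p i (⟨z₀, w, (M.raT cs ρ).1, (M.raT cs ρ).2,
            ⟨DTup.cons (Quiver.Hom.toPath e)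
                (DTup.cons (Quiver.Path.cons γ f) (DTup.cons α₂ rest')),
              ⟨by simp [Quiver.Hom.toPath], hβ, h₂, hrest'⟩⟩⟩ : NGen M p (r + 3))) (1:ℤ))
        = (-1:ℤ) ^ (0 + 1) • Finsupp.single (⟨z₀, w, (M.raT cs ρ).1, (M.raT cs ρ).2,
            ⟨DTup.cons (Quiver.Path.cons (Quiver.Path.cons γ f) e) (DTup.cons α₂ rest'),
              ⟨hpa, h₂, hrest'⟩⟩⟩ : NGen M p (r + 2)) 1
          + ∑ i : Fin (r + 1), (-1:ℤ) ^ ((i:ℕ) + 1 + 1) •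
              Finsupp.single (faceMid M p i.succ (⟨z₀, w, (M.raT cs ρ).1, (M.raT cs ρ).2,
                ⟨DTup.cons (Quiver.Hom.toPath e)
                    (DTup.cons (Quiver.Path.cons γ f) (DTup.cons α₂ rest')),
                  ⟨by simp [Quiver.Hom.toPath], hβ, h₂, hrest'⟩⟩⟩ : NGen M p (r + 3))) 1 := by
      rw [Fin.sum_univ_succ]
      congr 1
    have hsumP : (∑ x : Fin (r + 1), (-1:ℤ) ^ ((x:ℕ) + 1) •
          (- sGen M p (faceMid M p x (⟨z₀, w, (M.raT cs ρ).1, (M.raT cs ρ).2,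
            ⟨DTup.cons (Quiver.Path.cons (Quiver.Path.cons γ f) e) (DTup.cons α₂ rest'),
              ⟨hpa, h₂, hrest'⟩⟩⟩ : NGen M p (r + 2)))))
        = (∑ i : Fin (r + 1), (-1:ℤ) ^ ((i:ℕ) + 1) •
            (- Finsupp.single (faceMid M p i.succ (⟨z₀, w, (M.raT cs ρ).1, (M.raT cs ρ).2,
                ⟨DTup.cons (Quiver.Hom.toPath e)
                    (DTup.cons (Quiver.Path.cons γ f) (DTup.cons α₂ rest')),
                  ⟨by simp [Quiver.Hom.toPath], hβ, h₂, hrest'⟩⟩⟩ : NGen M p (r + 3))) (1:ℤ)))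
          + (∑ x : Fin (r + 1), (-1:ℤ) ^ ((x:ℕ) + 1) •
              (- sGen M p (faceMid M p x (⟨z₀, bb, (M.raT cs ((Quiver.Hom.toPath e).comp ρ)).1,
                (M.raT cs ((Quiver.Hom.toPath e).comp ρ)).2,
                ⟨DTup.cons (Quiver.Path.cons γ f) (DTup.cons α₂ rest'),
                  ⟨hβ, h₂, hrest'⟩⟩⟩ : NGen M p (r + 2))))) := by
      rw [← Finset.sum_add_distrib]
      exact Finset.sum_congr rfl (fun i _ => by rw [h3 i, neg_add, smul_add])
    rw [h1, h5, h4, hsumT, hsumP]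
    simp only [pow_succ, pow_zero, one_mul, mul_smul, neg_one_smul, smul_neg, neg_neg,
      smul_add, neg_add]
    abel

end Grand

/-- **Statement 17.** Let `E` be a directed graph, `𝒟` its path category, and `(𝒞, 𝒟, ◁, ▷)`
a length-preserving matched pair.  Fix `p ≥ 0`.  Then for every `q ≥ 2` (here `q = r + 2`),
the maps `s` and `d` on the nondegenerate vertical chains `N_q` satisfy
`d_{q+1} ∘ s_q + s_{q−1} ∘ d_q = id`. -/
theorem contracting_homotopy_on_nondegenerate_chains
    (V : Type u) [Quiver.{v + 1} V] (cC : Category.{max u (v + 1)} V)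
    (M : MatchedPair V cC (pathsCat V))
    -- the matched pair is length-preserving:
    (hlen : ∀ {z m y : V} (c : cC.Hom m y) (α : Quiver.Path z m),
      Quiver.Path.length (M.la c α) = Quiver.Path.length α)
    (p : ℕ) (r : ℕ) :
    ∀ x : NGrp M p (r + 2),
      bd M p (r + 2) (sMap M p (r + 1) x) + sMap M p r (bd M p (r + 1) x) = x := by
  have key : ∀ g : NGen M p (r + 2),
      bd M p (r + 2) (sMap M p (r + 1) (Finsupp.single g 1))
        + sMap M p r (bd M p (r + 1) (Finsupp.single g 1)) = Finsupp.single g 1 := by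
    rintro ⟨z, m, y, cs, ⟨α, hα⟩⟩
    cases α with
    | cons α₁ rest =>
      cases rest with
      | cons α₂ rest' =>
        obtain ⟨h1, h₂, hrest'⟩ := hα
        have G := grand M p r cs α₂ h₂ rest' hrest' Quiver.Path.nil α₁ h1
        rw [raT_id' M cs] at G
        rw [sMap_single]
        exact G
  have ext : ((bd M p (r + 2)).comp (sMap M p (r + 1))
      + (sMap M p r).comp (bd M p (r + 1))) = AddMonoidHom.id (NGrp M p (r + 2)) := by
    apply Finsupp.addHom_ext
    intro g n
    have hn : Finsupp.single g n = n • Finsupp.single g (1 : ℤ) := by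
      rw [Finsupp.smul_single, smul_eq_mul, mul_one]
    simp only [AddMonoidHom.add_apply, AddMonoidHom.coe_comp, Function.comp_apply,
      AddMonoidHom.id_apply, hn, map_zsmul]
    rw [key g]
  intro x
  have := DFunLike.congr_fun ext x
  simpa using this
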